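/- arXiv:2305.10697 — 2 statements merged into one kernel-verified Lean document; each statement's English description precedes it below -/
import Mathlib

section
/- Local error bound between synchronizations (synchronous setting): Assume τη ≤ 1/2. For any given δ ∈ (0,1), with probability at least 1-δ, simultaneously for all 1 ≤ i ≤ T and all agents k ∈ {1,…,K}, ‖Δ_i^k‖_∞ ≤ ‖Δ_{ι(i)}‖_∞ + (2/(1-γ)) · sqrt(η · log(|S||A|KT/δ)), where Δ_i^k = Q* − Q_i^k, Δ_{ι(i)} = Q* − (1/K)Σ_k Q_{ι(i)}^k, and ι(i) = τ⌊i/τ⌋ is the most recent synchronization step until i. -/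
open MeasureTheory ProbabilityTheory

/-- Maximum of a real-valued function over a finite (action) type. -/
noncomputable def vmax {A : Type*} [Fintype A] (f : A → ℝ) : ℝ := ⨆ a, f a

/-- Sup norm of a real-valued function over a finite index type. -/
noncomputable def supNorm {ι : Type*} (f : ι → ℝ) : ℝ := ⨆ i, |f i|


/- ### Auxiliary lemmas -/

set_option linter.unusedSectionVars false
section helpers

variable {ι : Type*} [Fintype ι] [Nonempty ι]

lemma abs_le_supNorm (f : ι → ℝ) (i : ι) : |f i| ≤ supNorm f :=
  le_ciSup (Set.Finite.bddAbove (Set.finite_range fun j => |f j|)) i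

lemma supNorm_le {f : ι → ℝ} {c : ℝ} (h : ∀ i, |f i| ≤ c) : supNorm f ≤ c :=
  ciSup_le h

lemma supNorm_nonneg (f : ι → ℝ) : 0 ≤ supNorm f :=
  le_trans (abs_nonneg _) (abs_le_supNorm f (Classical.arbitrary ι))

lemma le_vmax (f : ι → ℝ) (i : ι) : f i ≤ vmax f :=
  le_ciSup (Set.Finite.bddAbove (Set.finite_range _)) i

lemma vmax_le {f : ι → ℝ} {c : ℝ} (h : ∀ i, f i ≤ c) : vmax f ≤ c := ciSup_le h

lemma vmax_mem_Icc {f : ι → ℝ} {lo hi : ℝ} (h : ∀ i, f i ∈ Set.Icc lo hi) :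
    vmax f ∈ Set.Icc lo hi :=
  ⟨le_trans (h (Classical.arbitrary ι)).1 (le_vmax f _), vmax_le fun i => (h i).2⟩

lemma abs_vmax_sub_vmax_le {f g : ι → ℝ} {c : ℝ}
    (h : ∀ i, |f i - g i| ≤ c) : |vmax f - vmax g| ≤ c := by
  rw [abs_sub_le_iff]
  constructor
  · rw [sub_le_iff_le_add]
    refine vmax_le fun i => ?_
    have := (abs_sub_le_iff.1 (h i)).1
    have := le_vmax g i
    linarith
  · rw [sub_le_iff_le_add]
    refine vmax_le fun i => ?_
    have := (abs_sub_le_iff.1 (h i)).2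
    have := le_vmax f i
    linarith

end helpers

lemma exp_quad {x : ℝ} (hx : |x| ≤ 1) : Real.exp x ≤ 1 + x + (3/4) * x^2 := by
  have h := Real.exp_bound hx (by norm_num : 0 < 2)
  have hs : ∑ m ∈ Finset.range 2, x ^ m / (Nat.factorial m) = 1 + x := by
    simp [Finset.sum_range_succ]
  rw [hs] at h
  have h2 : |x| ^ 2 = x ^ 2 := sq_abs x
  rw [h2] at h
  have h3 := (abs_sub_le_iff.1 h).1
  have h4 : ((Nat.succ 2 : ℕ) : ℝ) / ((Nat.factorial 2 : ℕ) * (2:ℕ)) = 3/4 := by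
    norm_num [Nat.factorial]
  rw [h4] at h3
  linarith

lemma integrable_of_bounded_meas {Ω : Type*} [MeasurableSpace Ω] {Pr : Measure Ω}
    [IsProbabilityMeasure Pr] {f : Ω → ℝ} (hf : Measurable f) {C : ℝ}
    (h : ∀ ω, |f ω| ≤ C) : Integrable f Pr := by
  refine (integrable_const C).mono' hf.aestronglyMeasurable ?_
  exact Filter.Eventually.of_forall fun ω => by simpa using h ω

lemma iIndepFun_reindex {Ω ι κ β : Type*} [MeasurableSpace Ω] [mβ : MeasurableSpace β]
    {μ : Measure Ω} {F : ι → Ω → β}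
    (h : iIndepFun (m := fun _ => mβ) F μ) {e : κ → ι} (he : Function.Injective e) :
    iIndepFun (m := fun _ : κ => mβ) (fun j => F (e j)) μ := by
  classical
  rw [iIndepFun_iff_measure_inter_preimage_eq_mul] at h ⊢
  intro S sets hsets
  set sets' : ι → Set β := fun i =>
    if hi : ∃ j ∈ S, e j = i then sets hi.choose else Set.univ with hsets'def
  have hkey : ∀ j ∈ S, sets' (e j) = sets j := by
    intro j hj
    have hex : ∃ j' ∈ S, e j' = e j := ⟨j, hj, rfl⟩
    have hspec := hex.choose_spec
    have hjj : hex.choose = j := he hspec.2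
    simp only [sets', dif_pos hex, hjj]
  have h1 : (⋂ j ∈ S, F (e j) ⁻¹' sets j) = ⋂ i ∈ S.image e, F i ⁻¹' sets' i := by
    ext ω
    simp only [Set.mem_iInter, Finset.mem_image]
    constructor
    · rintro H i ⟨j, hj, rfl⟩
      rw [hkey j hj]; exact H j hj
    · intro H j hj
      have := H (e j) ⟨j, hj, rfl⟩
      rwa [hkey j hj] at this
  have h2 : ∀ i ∈ S.image e, MeasurableSet (sets' i) := by
    intro i hi
    obtain ⟨j, hj, rfl⟩ := Finset.mem_image.1 hi
    rw [hkey j hj]; exact hsets j hj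
  have h3 := h (S.image e) h2
  rw [h1, h3, Finset.prod_image]
  · exact Finset.prod_congr rfl fun j hj => by rw [hkey j hj]
  · intro x hx y hy hxy; exact he hxy

lemma integral_comp_sample {S Ω : Type*} [Fintype S] [MeasurableSpace S]
    [MeasurableSingletonClass S] [MeasurableSpace Ω] (Pr : Measure Ω)
    [IsProbabilityMeasure Pr] {X : Ω → S} (hX : Measurable X) (p : S → ℝ)
    (hp0 : ∀ s, 0 ≤ p s) (hlaw : ∀ s', Pr {ω | X ω = s'} = ENNReal.ofReal (p s'))
    (g : S → ℝ) : ∫ ω, g (X ω) ∂Pr = ∑ s', p s' * g s' := by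
  have hpre : ∀ s' : S, X ⁻¹' {s'} = {ω | X ω = s'} := by
    intro s'; ext ω; simp [Set.mem_preimage]
  have hfun : (fun ω => g (X ω))
      = fun ω => ∑ s', Set.indicator (X ⁻¹' {s'}) (fun _ => g s') ω := by
    funext ω
    rw [Finset.sum_eq_single (X ω)]
    · simp [Set.indicator_of_mem, Set.mem_preimage]
    · intro b _ hb
      apply Set.indicator_of_notMem
      simp only [Set.mem_preimage, Set.mem_singleton_iff]
      exact fun h => hb h.symm
    · intro h; exact absurd (Finset.mem_univ _) h
  rw [hfun, integral_finset_sum]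
  · refine Finset.sum_congr rfl fun s' _ => ?_
    rw [integral_indicator_const (g s') (hX (measurableSet_singleton s'))]
    rw [measureReal_def, hpre, hlaw, smul_eq_mul, ENNReal.toReal_ofReal (hp0 s')]
  · intro s' _
    exact (integrable_const (g s')).indicator (hX (measurableSet_singleton s'))

lemma chernoff_weighted {S Ω : Type*} [Fintype S] [MeasurableSpace S]
    [MeasurableSingletonClass S] [MeasurableSpace Ω] (Pr : Measure Ω)
    [IsProbabilityMeasure Pr]
    (Y : ℕ → Ω → S) (hYm : ∀ j, Measurable (Y j))
    (hYindep : iIndepFun (m := fun _ => inferInstance) Y Pr)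
    (p : S → ℝ) (hp0 : ∀ s, 0 ≤ p s) (hp1 : ∑ s', p s' = 1)
    (hlaw : ∀ j s', Pr {ω | Y j ω = s'} = ENNReal.ofReal (p s'))
    (g : S → ℝ) (R : ℝ) (hR : 0 ≤ R) (hg : ∀ s', |g s'| ≤ R)
    (hmean : ∑ s', p s' * g s' = 0) (hvar : ∑ s', p s' * (g s')^2 ≤ R^2/4)
    (w : ℕ → ℝ) (η : ℝ) (hw : ∀ j, 0 ≤ w j ∧ w j ≤ η)
    (s : Finset ℕ) (t0 lam : ℝ) (ht0 : 0 ≤ t0) (ht0c : t0 * (η * R) ≤ 1) :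
    Pr {ω | lam ≤ ∑ j ∈ s, w j * g (Y j ω)} ≤
      ENNReal.ofReal (Real.exp (-t0*lam + (3/16)*t0^2*R^2 * ∑ j ∈ s, (w j)^2)) := by
  have hη0 : 0 ≤ η := le_trans (hw 0).1 (hw 0).2
  set X : ℕ → Ω → ℝ := fun j ω => w j * g (Y j ω) with hX
  have hXm : ∀ j, Measurable (X j) :=
    fun j => ((measurable_of_countable g).comp (hYm j)).const_mul (w j)
  have hXb : ∀ j ω, |X j ω| ≤ η * R := by
    intro j ω
    rw [hX, abs_mul, abs_of_nonneg (hw j).1]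
    exact mul_le_mul (hw j).2 (hg _) (abs_nonneg _) hη0
  have hXindep : iIndepFun (m := fun _ => inferInstance) X Pr := by
    have := hYindep.comp (fun j => fun x => w j * g x)
      (fun j => (measurable_of_countable g).const_mul (w j))
    exact this
  -- mgf bound for each summand
  have hmgf : ∀ j, mgf (X j) Pr t0 ≤ Real.exp ((3/16) * t0^2 * R^2 * (w j)^2) := by
    intro j
    have hcomp : mgf (X j) Pr t0
        = ∑ s', p s' * Real.exp (t0 * (w j * g s')) := by
      rw [mgf]
      exact integral_comp_sample Pr (hYm j) p hp0 (hlaw j)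
        (fun s' => Real.exp (t0 * (w j * g s')))
    rw [hcomp]
    have hstep : ∑ s', p s' * Real.exp (t0 * (w j * g s'))
        ≤ ∑ s', p s' * (1 + t0 * (w j * g s') + (3/4) * (t0 * (w j * g s'))^2) := by
      refine Finset.sum_le_sum fun s' _ => ?_
      refine mul_le_mul_of_nonneg_left ?_ (hp0 s')
      refine exp_quad ?_
      rw [abs_mul, abs_of_nonneg ht0, abs_mul, abs_of_nonneg (hw j).1]
      calc t0 * (w j * |g s'|) ≤ t0 * (η * R) := by
            refine mul_le_mul_of_nonneg_left ?_ ht0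
            exact mul_le_mul (hw j).2 (hg s') (abs_nonneg _) hη0
        _ ≤ 1 := ht0c
    refine le_trans hstep ?_
    have hexpand : ∑ s', p s' * (1 + t0 * (w j * g s') + (3/4) * (t0 * (w j * g s'))^2)
        = (∑ s', p s') + (t0 * w j) * (∑ s', p s' * g s')
          + ((3/4) * t0^2 * (w j)^2) * (∑ s', p s' * (g s')^2) := by
      rw [Finset.mul_sum, Finset.mul_sum, ← Finset.sum_add_distrib, ← Finset.sum_add_distrib]
      exact Finset.sum_congr rfl fun s' _ => by ring
    rw [hexpand, hp1, hmean]
    have h1 : (3/4) * t0^2 * (w j)^2 * (∑ s', p s' * (g s')^2)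
        ≤ (3/4) * t0^2 * (w j)^2 * (R^2/4) := by
      refine mul_le_mul_of_nonneg_left hvar (by positivity)
    have h2 := Real.add_one_le_exp ((3/16) * t0^2 * R^2 * (w j)^2)
    have h3 : (3/4) * t0^2 * (w j)^2 * (R^2/4) = (3/16) * t0^2 * R^2 * (w j)^2 := by ring
    linarith
  -- mgf of the sum
  have hsum_mgf : mgf (∑ j ∈ s, X j) Pr t0 = ∏ j ∈ s, mgf (X j) Pr t0 :=
    hXindep.mgf_sum hXm s
  have hprod : ∏ j ∈ s, mgf (X j) Pr t0
      ≤ Real.exp ((3/16) * t0^2 * R^2 * ∑ j ∈ s, (w j)^2) := by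
    rw [Finset.mul_sum, Real.exp_sum]
    exact Finset.prod_le_prod (fun j _ => mgf_nonneg) (fun j _ => by
      have := hmgf j
      rwa [show (3/16) * t0^2 * R^2 * (w j)^2 = 3 / 16 * t0 ^ 2 * R ^ 2 * w j ^ 2 from rfl] at this)
  -- Chernoff
  have hint : Integrable (fun ω => Real.exp (t0 * (∑ j ∈ s, X j) ω)) Pr := by
    refine integrable_of_bounded_meas ?_ (C := Real.exp (t0 * (s.card * (η * R)))) ?_
    · simp only [Finset.sum_apply]
      exact ((Finset.measurable_sum s (fun j _ => hXm j)).const_mul t0).exp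
    · intro ω
      rw [abs_of_nonneg (Real.exp_nonneg _)]
      · refine Real.exp_le_exp.2 ?_
        refine mul_le_mul_of_nonneg_left ?_ ht0
        rw [Finset.sum_apply]
        calc ∑ j ∈ s, X j ω ≤ ∑ j ∈ s, (η * R) := by
              refine Finset.sum_le_sum fun j _ => le_trans (le_abs_self _) (hXb j ω)
          _ = s.card * (η * R) := by rw [Finset.sum_const, nsmul_eq_mul]
  have hcher := measure_ge_le_exp_mul_mgf (μ := Pr) (X := ∑ j ∈ s, X j) lam ht0 hint
  have hset : {ω | lam ≤ (∑ j ∈ s, X j) ω} = {ω | lam ≤ ∑ j ∈ s, w j * g (Y j ω)} := by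
    ext ω; simp [Finset.sum_apply, hX]
  rw [hset] at hcher
  have hfinal : (Pr {ω | lam ≤ ∑ j ∈ s, w j * g (Y j ω)}).toReal
      ≤ Real.exp (-t0*lam + (3/16)*t0^2*R^2 * ∑ j ∈ s, (w j)^2) := by
    refine le_trans hcher ?_
    rw [Real.exp_add]
    refine mul_le_mul_of_nonneg_left (le_trans (le_of_eq hsum_mgf) hprod) (Real.exp_nonneg _)
  rw [← ENNReal.ofReal_toReal (measure_ne_top Pr _)]
  exact ENNReal.ofReal_le_ofReal hfinal

set_option maxHeartbeats 4000000 in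
/-- local error bound between synchronizations (synchronous setting).
If `τη ≤ 1/2`, then with probability at least `1-δ`, simultaneously for all
`1 ≤ i ≤ T` and all agents `k`,
`‖Δ_i^k‖_∞ ≤ ‖Δ_{ι(i)}‖_∞ + (2/(1-γ)) √(η log(|S||A|KT/δ))`, where
`Δ_i^k = Q* − Q_i^k`, `Δ_{ι(i)} = Q* − (1/K)Σ_k Q_{ι(i)}^k`, and `ι(i) = τ⌊i/τ⌋`. -/
theorem fedSynQ_local_error_bound
    {S A : Type*} [Fintype S] [Fintype A] [Nonempty S] [Nonempty A]
    [MeasurableSpace S] [MeasurableSingletonClass S]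
    {Ω : Type*} [MeasurableSpace Ω] (Pr : Measure Ω) [IsProbabilityMeasure Pr]
    -- the MDP
    (P : S × A → S → ℝ) (r : S × A → ℝ) (γ : ℝ)
    (hP0 : ∀ sa s', 0 ≤ P sa s') (hP1 : ∀ sa, ∑ s', P sa s' = 1)
    (hr : ∀ sa, r sa ∈ Set.Icc (0 : ℝ) 1) (hγ : γ ∈ Set.Ico (0 : ℝ) 1)
    -- the optimal Q-function (Bellman fixed point)
    (Qstar : S × A → ℝ)
    (hQstar : ∀ sa, Qstar sa
        = r sa + γ * ∑ s', P sa s' * vmax fun a' => Qstar (s', a'))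
    -- algorithm parameters
    (K T τ : ℕ) (hK : 0 < K) (hT : 0 < T) (hτ : 0 < τ) (hτT : τ ∣ T)
    (η : ℝ) (hη0 : 0 < η) (hη1 : η < 1)
    (δ : ℝ) (hδ : δ ∈ Set.Ioo (0 : ℝ) 1)
    -- synchronous samples from the generative model
    (samp : ℕ → Fin K → S × A → Ω → S)
    (hmeas : ∀ t k sa, Measurable (samp t k sa))
    (hlaw : ∀ t k sa s', Pr {ω | samp t k sa ω = s'} = ENNReal.ofReal (P sa s'))
    (hindep : iIndepFun (m := fun _ => inferInstance)
      (fun (p : ℕ × Fin K × (S × A)) ω => samp p.1 p.2.1 p.2.2 ω) Pr)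
    -- the iterates of FedSynQ
    (Q0 : S × A → ℝ) (hQ0 : ∀ sa, Q0 sa ∈ Set.Icc (0 : ℝ) (1 / (1 - γ)))
    (Q Qhalf : ℕ → Fin K → S × A → Ω → ℝ)
    (hinit : ∀ k sa ω, Q 0 k sa ω = Q0 sa)
    (hupd : ∀ t k sa ω, Qhalf (t + 1) k sa ω
        = (1 - η) * Q t k sa ω
          + η * (r sa + γ * vmax fun a' => Q t k (samp (t + 1) k sa ω, a') ω))
    (havg : ∀ t k sa ω, Q (t + 1) k sa ω
        = if τ ∣ (t + 1) then (K : ℝ)⁻¹ * ∑ k' : Fin K, Qhalf (t + 1) k' sa ω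
          else Qhalf (t + 1) k sa ω)
    -- the learning rate condition `τη ≤ 1/2`
    (hτη : (τ : ℝ) * η ≤ 1 / 2) :
    Pr {ω | ∀ i, 1 ≤ i → i ≤ T → ∀ k : Fin K,
          supNorm (fun sa : S × A => Qstar sa - Q i k sa ω)
            ≤ supNorm (fun sa : S × A =>
                  Qstar sa - (K : ℝ)⁻¹ * ∑ k' : Fin K, Q (τ * (i / τ)) k' sa ω)
              + 2 / (1 - γ)
                * Real.sqrt (η
                    * Real.log ((Fintype.card S) * (Fintype.card A) * K * T / δ))}
      ≥ ENNReal.ofReal (1 - δ) := by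
  classical
  obtain ⟨hγ0, hγ1⟩ := hγ
  obtain ⟨hδ0, hδ1⟩ := hδ
  have h1γ : 0 < 1 - γ := by linarith
  set R : ℝ := 1 / (1 - γ) with hRdef
  have hR0 : 0 < R := by positivity
  have hR1 : 1 + γ * R = R := by rw [hRdef]; field_simp; ring
  set Vstar : S → ℝ := fun s => vmax fun a => Qstar (s, a) with hVdef
  set μm : S × A → ℝ := fun sa => ∑ s', P sa s' * Vstar s' with hmudef
  have hQstar' : ∀ sa, Qstar sa = r sa + γ * μm sa := fun sa => hQstar sa
  -- bounds on Qstar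
  have hQs_ub : ∀ sa, Qstar sa ≤ R := by
    set W := ⨆ sa, Qstar sa with hW
    have hle : ∀ sa, Qstar sa ≤ W := fun sa =>
      le_ciSup (Set.Finite.bddAbove (Set.finite_range _)) sa
    have hWle : W ≤ 1 + γ * W := by
      refine ciSup_le fun sa => ?_
      rw [hQstar' sa]
      have h1 : μm sa ≤ W := by
        rw [hmudef]
        calc ∑ s', P sa s' * Vstar s' ≤ ∑ s', P sa s' * W := by
              refine Finset.sum_le_sum fun s' _ => ?_
              exact mul_le_mul_of_nonneg_left (vmax_le fun a => hle (s', a)) (hP0 sa s')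
          _ = W := by rw [← Finset.sum_mul, hP1, one_mul]
      have h2 := (hr sa).2
      nlinarith
    have hWR : W ≤ R := by nlinarith [hR1]
    exact fun sa => le_trans (hle sa) hWR
  have hQs_lb : ∀ sa, 0 ≤ Qstar sa := by
    set w := ⨅ sa, Qstar sa with hw
    have hge : ∀ sa, w ≤ Qstar sa := fun sa =>
      ciInf_le (Set.Finite.bddBelow (Set.finite_range _)) sa
    have hwge : γ * w ≤ w := by
      have : ∀ sa, γ * w ≤ Qstar sa := by
        intro sa
        rw [hQstar' sa]
        have h1 : w ≤ μm sa := by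
          rw [hmudef]
          calc w = ∑ s', P sa s' * w := by rw [← Finset.sum_mul, hP1, one_mul]
            _ ≤ ∑ s', P sa s' * Vstar s' := by
              refine Finset.sum_le_sum fun s' _ => ?_
              refine mul_le_mul_of_nonneg_left ?_ (hP0 sa s')
              exact le_trans (hge (s', Classical.arbitrary A)) (le_vmax (fun a => Qstar (s', a)) _)
        have h2 := (hr sa).1
        nlinarith
      exact le_ciInf this
    have hw0 : 0 ≤ w := by nlinarith
    exact fun sa => le_trans hw0 (hge sa)
  have hVs_mem : ∀ s, Vstar s ∈ Set.Icc 0 R :=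
    fun s => vmax_mem_Icc fun a => ⟨hQs_lb _, hQs_ub _⟩
  have hμ_mem : ∀ sa, μm sa ∈ Set.Icc 0 R := by
    intro sa
    constructor
    · exact Finset.sum_nonneg fun s' _ => mul_nonneg (hP0 sa s') (hVs_mem s').1
    · calc ∑ s', P sa s' * Vstar s' ≤ ∑ s', P sa s' * R := by
            refine Finset.sum_le_sum fun s' _ => ?_
            exact mul_le_mul_of_nonneg_left (hVs_mem s').2 (hP0 sa s')
        _ = R := by rw [← Finset.sum_mul, hP1, one_mul]
  -- bounds on the iterates
  have hQmem : ∀ t k sa ω, Q t k sa ω ∈ Set.Icc 0 R := by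
    intro t
    induction t with
    | zero => intro k sa ω; rw [hinit]; exact hQ0 sa
    | succ t ih =>
      have hhalf : ∀ k sa ω, Qhalf (t + 1) k sa ω ∈ Set.Icc 0 R := by
        intro k sa ω
        rw [hupd]
        have hv := vmax_mem_Icc (f := fun a => Q t k (samp (t+1) k sa ω, a) ω)
          (fun a => ih k _ ω)
        have hq := ih k sa ω
        have hrs := hr sa
        constructor
        · have h1 : 0 ≤ r sa + γ * vmax fun a' => Q t k (samp (t+1) k sa ω, a') ω :=
            add_nonneg hrs.1 (mul_nonneg hγ0 hv.1)
          have h2 : (0:ℝ) ≤ 1 - η := by linarith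
          exact add_nonneg (mul_nonneg h2 hq.1) (mul_nonneg hη0.le h1)
        · have h1 : r sa + γ * (vmax fun a' => Q t k (samp (t+1) k sa ω, a') ω) ≤ R := by
            calc r sa + γ * (vmax fun a' => Q t k (samp (t+1) k sa ω, a') ω)
                ≤ 1 + γ * R := by
                  have := mul_le_mul_of_nonneg_left hv.2 hγ0
                  linarith [hrs.2]
              _ = R := hR1
          have h2 : (0:ℝ) ≤ 1 - η := by linarith
          nlinarith [hq.2]
      intro k sa ω
      rw [havg]
      by_cases hdvd : τ ∣ (t + 1)
      · rw [if_pos hdvd]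
        constructor
        · refine mul_nonneg (by positivity) (Finset.sum_nonneg fun k' _ => (hhalf k' sa ω).1)
        · have hsum : ∑ k' : Fin K, Qhalf (t+1) k' sa ω ≤ (K : ℝ) * R := by
            calc ∑ k' : Fin K, Qhalf (t+1) k' sa ω ≤ ∑ _k' : Fin K, R :=
                  Finset.sum_le_sum fun k' _ => (hhalf k' sa ω).2
              _ = (K : ℝ) * R := by
                  rw [Finset.sum_const, Finset.card_univ, Fintype.card_fin, nsmul_eq_mul]
          have hKpos : (0:ℝ) < K := by exact_mod_cast hK
          calc (K : ℝ)⁻¹ * ∑ k' : Fin K, Qhalf (t+1) k' sa ω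
              ≤ (K : ℝ)⁻¹ * ((K:ℝ) * R) := by
                exact mul_le_mul_of_nonneg_left hsum (by positivity)
            _ = R := by field_simp
      · rw [if_neg hdvd]; exact hhalf k sa ω
  -- at synchronization times all agents agree with the average
  have hQavg : ∀ t, τ ∣ t → ∀ k sa ω,
      (K : ℝ)⁻¹ * ∑ k' : Fin K, Q t k' sa ω = Q t k sa ω := by
    intro t hdvd k sa ω
    have hsame : ∀ k', Q t k' sa ω = Q t k sa ω := by
      intro k'
      cases t with
      | zero => rw [hinit, hinit]
      | succ n => rw [havg, havg, if_pos hdvd, if_pos hdvd]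
    rw [Finset.sum_congr rfl (fun k' _ => hsame k'), Finset.sum_const,
      Finset.card_univ, Fintype.card_fin, nsmul_eq_mul]
    have hKpos : (0:ℝ) < K := by exact_mod_cast hK
    field_simp
  -- abbreviations
  set Lr : ℝ := Real.log ((Fintype.card S) * (Fintype.card A) * K * T / δ) with hLdef
  set lam : ℝ := R * Real.sqrt (η * Lr) with hlamdef
  have hlam0 : 0 ≤ lam := mul_nonneg hR0.le (Real.sqrt_nonneg _)
  have hgoalform : 2 / (1 - γ) * Real.sqrt (η * Lr) = 2 * lam := by
    rw [hlamdef, hRdef]; ring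
  -- trivial case τ = 1
  by_cases hτ1 : τ = 1
  · have h1 : ENNReal.ofReal (1 - δ) ≤ Pr Set.univ := by
      rw [measure_univ]
      exact le_trans (ENNReal.ofReal_le_ofReal (by linarith)) (le_of_eq ENNReal.ofReal_one)
    refine le_trans h1 (measure_mono ?_)
    intro ω _
    simp only [Set.mem_setOf_eq]
    intro i hi1 hiT k
    have hii : τ * (i / τ) = i := by subst hτ1; simp
    have hdvd : τ ∣ i := hτ1 ▸ one_dvd i
    have heq : (fun sa : S × A => Qstar sa - Q i k sa ω)
        = fun sa : S × A => Qstar sa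
            - (K : ℝ)⁻¹ * ∑ k' : Fin K, Q (τ * (i / τ)) k' sa ω := by
      funext sa
      rw [hii, hQavg i hdvd k sa ω]
    rw [heq]
    have : 0 ≤ 2 / (1 - γ) * Real.sqrt (η * Lr) :=
      mul_nonneg (by positivity) (Real.sqrt_nonneg _)
    linarith
  -- main case: τ ≥ 2
  have hτ2 : 2 ≤ τ := by omega
  have hT2 : 2 ≤ T := le_trans hτ2 (Nat.le_of_dvd hT hτT)
  have hcS : (1:ℝ) ≤ (Fintype.card S : ℝ) := by exact_mod_cast Fintype.card_pos
  have hcA : (1:ℝ) ≤ (Fintype.card A : ℝ) := by exact_mod_cast Fintype.card_pos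
  have hcK : (1:ℝ) ≤ (K : ℝ) := by exact_mod_cast hK
  have hcT : (2:ℝ) ≤ (T : ℝ) := by exact_mod_cast hT2
  have hNr2 : (2:ℝ) ≤ (Fintype.card S) * (Fintype.card A) * K * T := by
    calc (2:ℝ) ≤ (T:ℝ) := hcT
      _ = 1 * 1 * 1 * (T:ℝ) := by ring
      _ ≤ (Fintype.card S) * (Fintype.card A) * K * T := by
          gcongr <;> linarith
  have hNrδ : (0:ℝ) < (Fintype.card S) * (Fintype.card A) * K * T / δ := by positivity
  have hLpos : 0 < Lr := by
    rw [hLdef]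
    refine Real.log_pos ?_
    rw [lt_div_iff₀ hδ0]
    linarith
  have hlampos : 0 < lam := by
    rw [hlamdef]
    have : 0 < Real.sqrt (η * Lr) := Real.sqrt_pos.2 (by positivity)
    positivity
  have hexpL : Real.exp Lr = (Fintype.card S) * (Fintype.card A) * K * T / δ :=
    Real.exp_log hNrδ
  -- facts about the block structure
  have hblock : ∀ i : ℕ, τ * (i / τ) ≤ i ∧ i - τ * (i / τ) < τ ∧ τ ∣ τ * (i / τ) := by
    intro i
    refine ⟨Nat.mul_div_le i τ, ?_, Dvd.intro (i / τ) rfl⟩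
    have h1 := Nat.div_add_mod i τ
    have h2 := Nat.mod_lt i hτ
    omega
  have hι_self : ∀ b : ℕ, τ ∣ b → τ * (b / τ) = b := fun b hb => Nat.mul_div_cancel' hb
  have hι_add : ∀ b n : ℕ, τ ∣ b → n < τ → τ * ((b + n) / τ) = b := by
    intro b n hb hn
    obtain ⟨q, rfl⟩ := hb
    rw [Nat.mul_add_div hτ, Nat.div_eq_of_lt hn, add_zero]
  by_cases hreg : Real.sqrt (η * Lr) ≤ 1/4
  case neg =>
    -- deterministic regime : the extra term already dominates the drift
    have hreg' : 1/4 < Real.sqrt (η * Lr) := lt_of_not_ge hreg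
    have h1 : ENNReal.ofReal (1 - δ) ≤ Pr Set.univ := by
      rw [measure_univ]
      exact le_trans (ENNReal.ofReal_le_ofReal (by linarith)) (le_of_eq ENNReal.ofReal_one)
    refine le_trans h1 (measure_mono ?_)
    intro ω _
    simp only [Set.mem_setOf_eq]
    intro i hi1 hiT k
    obtain ⟨hble, hmlt, hbdvd⟩ := hblock i
    set b := τ * (i / τ) with hbdef
    set ub := supNorm (fun sa : S × A =>
      Qstar sa - (K : ℝ)⁻¹ * ∑ k' : Fin K, Q b k' sa ω) with hubdef
    have hub0 : 0 ≤ ub := supNorm_nonneg _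
    have hclaim : ∀ n, b + n ≤ i → ∀ sa,
        |Qstar sa - Q (b + n) k sa ω| ≤ ub + n * (η * γ * R) := by
      intro n
      induction n with
      | zero =>
        intro _ sa
        simp only [Nat.add_zero, Nat.cast_zero, zero_mul, add_zero]
        rw [← hQavg b hbdvd k sa ω]
        exact abs_le_supNorm (fun sa : S × A =>
          Qstar sa - (K : ℝ)⁻¹ * ∑ k' : Fin K, Q b k' sa ω) sa
      | succ n ih =>
        intro hle sa
        rw [← Nat.add_assoc]
        have hlen : b + n ≤ i := by omega
        have ihn := ih hlen sa
        have hndvd : ¬ τ ∣ (b + n + 1) := by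
          intro hdvd
          have h2 : τ ∣ (n + 1) := by
            have h3 := Nat.dvd_sub hdvd hbdvd
            have h4 : b + n + 1 - b = n + 1 := by omega
            rwa [h4] at h3
          have := Nat.le_of_dvd (by omega) h2
          omega
        have hQstep : Q (b + n + 1) k sa ω
            = (1 - η) * Q (b + n) k sa ω
              + η * (r sa + γ * vmax fun a' => Q (b + n) k (samp (b + n + 1) k sa ω, a') ω) := by
          rw [havg, if_neg hndvd, hupd]
        set s' := samp (b + n + 1) k sa ω with hs'def
        have hVt := vmax_mem_Icc (f := fun a => Q (b + n) k (s', a) ω)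
          (fun a => hQmem (b + n) k (s', a) ω)
        have hkey : Qstar sa - Q (b + n + 1) k sa ω
            = (1 - η) * (Qstar sa - Q (b + n) k sa ω)
              + η * γ * (μm sa - vmax fun a => Q (b + n) k (s', a) ω) := by
          rw [hQstep]
          linear_combination η * hQstar' sa
        rw [hkey]
        have hd : |μm sa - vmax fun a => Q (b + n) k (s', a) ω| ≤ R := by
          rw [abs_sub_le_iff]
          constructor
          · linarith [(hμ_mem sa).2, hVt.1]
          · linarith [(hμ_mem sa).1, hVt.2]
        have h2 : (0:ℝ) ≤ 1 - η := by linarith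
        have habs : |(1 - η) * (Qstar sa - Q (b + n) k sa ω)
              + η * γ * (μm sa - vmax fun a => Q (b + n) k (s', a) ω)|
            ≤ (1 - η) * |Qstar sa - Q (b + n) k sa ω|
              + η * γ * |μm sa - vmax fun a => Q (b + n) k (s', a) ω| := by
          refine le_trans (abs_add_le _ _) ?_
          rw [abs_mul, abs_mul, abs_of_nonneg h2,
            abs_of_nonneg (by positivity : (0:ℝ) ≤ η * γ)]
        have h3 : (1 - η) * |Qstar sa - Q (b + n) k sa ω|
            ≤ (1 - η) * (ub + n * (η * γ * R)) := mul_le_mul_of_nonneg_left ihn h2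
        have h4 : η * γ * |μm sa - vmax fun a => Q (b + n) k (s', a) ω| ≤ η * γ * R :=
          mul_le_mul_of_nonneg_left hd (by positivity)
        have hXnn : (0:ℝ) ≤ ub + (n:ℝ) * (η * γ * R) :=
          add_nonneg hub0 (mul_nonneg (Nat.cast_nonneg n)
            (mul_nonneg (mul_nonneg hη0.le hγ0) hR0.le))
        have h5 : (1 - η) * (ub + (n:ℝ) * (η * γ * R)) ≤ ub + (n:ℝ) * (η * γ * R) := by
          have := mul_le_mul_of_nonneg_right (by linarith : 1 - η ≤ 1) hXnn
          linarith
        have h6 : ((n:ℕ) + 1 : ℝ) * (η * γ * R) = (n:ℝ) * (η * γ * R) + η * γ * R := by ring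
        push_cast
        linarith
    have hbi : b + (i - b) = i := by omega
    have hfin := hclaim (i - b) (by omega)
    rw [hbi] at hfin
    have hcast : ((i - b : ℕ) : ℝ) ≤ (τ : ℝ) := by exact_mod_cast hmlt.le
    have hdrift : ((i - b : ℕ) : ℝ) * (η * γ * R) ≤ 2 * lam := by
      have h1 : ((i - b : ℕ) : ℝ) * η ≤ 1/2 :=
        le_trans (mul_le_mul_of_nonneg_right hcast hη0.le) hτη
      have hγR : (0:ℝ) ≤ γ * R := by positivity
      have h2 : ((i - b : ℕ) : ℝ) * (η * γ * R) ≤ (1/2) * (γ * R) := by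
        calc ((i - b : ℕ) : ℝ) * (η * γ * R) = (((i - b : ℕ) : ℝ) * η) * (γ * R) := by ring
          _ ≤ (1/2) * (γ * R) := mul_le_mul_of_nonneg_right h1 hγR
      have h3 : γ * R ≤ R := by linarith [hR1]
      have h4 : R * (1/4) ≤ R * Real.sqrt (η * Lr) :=
        mul_le_mul_of_nonneg_left hreg'.le hR0.le
      rw [hlamdef]
      linarith
    rw [hgoalform]
    refine supNorm_le fun sa => ?_
    have := hfin sa
    linarith
  case pos =>
    -- probabilistic regime
    set sq : ℝ := Real.sqrt (η * Lr) with hsqdef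
    set t0 : ℝ := 4 * sq / (η * R) with ht0def
    have hsq : sq ^ 2 = η * Lr := Real.sq_sqrt (mul_nonneg hη0.le hLpos.le)
    have hsqpos : 0 < sq := Real.sqrt_pos.2 (mul_pos hη0 hLpos)
    have hηR : (0:ℝ) < η * R := mul_pos hη0 hR0
    have ht0pos : 0 < t0 := by
      rw [ht0def]
      exact div_pos (by linarith) hηR
    have ht0c : t0 * (η * R) ≤ 1 := by
      rw [ht0def, div_mul_cancel₀ _ (ne_of_gt hηR)]
      linarith
    set Nsum : ℕ → Fin K → (S × A) → Ω → ℝ := fun i k sa ω =>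
      ∑ j ∈ Finset.Ioc (τ * (i / τ)) i,
        η * (1 - η) ^ (i - j) * (μm sa - Vstar (samp j k sa ω)) with hNdef
    have hNmeas : ∀ i k sa, Measurable (fun ω => Nsum i k sa ω) := by
      intro i k sa
      refine Finset.measurable_sum _ fun j _ => ?_
      exact (measurable_const.sub
        ((measurable_of_countable Vstar).comp (hmeas j k sa))).const_mul _
    set bad : Set Ω := ⋃ i ∈ Finset.Icc 1 T, ⋃ k : Fin K, ⋃ sa : S × A,
      {ω | lam ≤ |Nsum i k sa ω|} with hbaddef
    have hbadmeas : MeasurableSet bad := by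
      refine Finset.measurableSet_biUnion _ fun i _ => ?_
      refine MeasurableSet.iUnion fun k => ?_
      refine MeasurableSet.iUnion fun sa => ?_
      exact measurableSet_le measurable_const (hNmeas i k sa).abs
    -- one-sided Chernoff bound for each event
    have hone : ∀ (i : ℕ) (k : Fin K) (sa : S × A) (g : S → ℝ),
        (∀ s'', |g s''| ≤ R) → (∑ s'', P sa s'' * g s'' = 0) →
        (∑ s'', P sa s'' * (g s'')^2 ≤ R^2/4) →
        Pr {ω | lam ≤ ∑ j ∈ Finset.Ioc (τ * (i / τ)) i,
            η * (1 - η) ^ (i - j) * g (samp j k sa ω)} ≤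
          ENNReal.ofReal (Real.exp (-(2 * Lr))) := by
      intro i k sa g hgb hgm hgv
      have hinj : Function.Injective (fun j : ℕ => (j, k, sa)) := by
        intro a b hab
        simpa using congrArg Prod.fst hab
      have hYindep : iIndepFun (m := fun _ : ℕ => (inferInstance : MeasurableSpace S))
          (fun j => samp j k sa) Pr := iIndepFun_reindex hindep hinj
      have hw : ∀ j : ℕ, 0 ≤ η * (1 - η) ^ (i - j) ∧ η * (1 - η) ^ (i - j) ≤ η := by
        intro j
        have h1 : (0:ℝ) ≤ (1 - η) ^ (i - j) := pow_nonneg (by linarith) _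
        have h2 : (1 - η) ^ (i - j) ≤ 1 := pow_le_one₀ (by linarith) (by linarith)
        refine ⟨mul_nonneg hη0.le h1, ?_⟩
        have := mul_le_mul_of_nonneg_left h2 hη0.le
        linarith
      have hch := chernoff_weighted Pr (fun j => samp j k sa) (fun j => hmeas j k sa)
        hYindep (P sa) (hP0 sa) (hP1 sa) (fun j s'' => hlaw j k sa s'') g R hR0.le hgb hgm hgv
        (fun j => η * (1 - η) ^ (i - j)) η hw (Finset.Ioc (τ * (i / τ)) i) t0 lam ht0pos.le ht0c
      refine le_trans hch (ENNReal.ofReal_le_ofReal (Real.exp_le_exp.2 ?_))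
      obtain ⟨hble, hmlt, _⟩ := hblock i
      have hcard : (Finset.Ioc (τ * (i / τ)) i).card = i - τ * (i / τ) := Nat.card_Ioc _ _
      have hwsum : ∑ j ∈ Finset.Ioc (τ * (i / τ)) i, (η * (1 - η) ^ (i - j))^2
          ≤ (τ:ℝ) * η^2 := by
        have h1 : ∀ j ∈ Finset.Ioc (τ * (i / τ)) i, (η * (1 - η) ^ (i - j))^2 ≤ η^2 := by
          intro j _
          obtain ⟨ha, hb⟩ := hw j
          have := sq_le_sq' (by linarith : -η ≤ η * (1 - η) ^ (i - j)) hb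
          exact this
        calc ∑ j ∈ Finset.Ioc (τ * (i / τ)) i, (η * (1 - η) ^ (i - j))^2
            ≤ (Finset.Ioc (τ * (i / τ)) i).card • (η^2) := Finset.sum_le_card_nsmul _ _ _ h1
          _ = ((i - τ * (i / τ) : ℕ) : ℝ) * η^2 := by rw [hcard, nsmul_eq_mul]
          _ ≤ (τ:ℝ) * η^2 := by
              have hc : ((i - τ * (i / τ) : ℕ) : ℝ) ≤ (τ:ℝ) := by exact_mod_cast hmlt.le
              exact mul_le_mul_of_nonneg_right hc (sq_nonneg η)
      have hA : t0 * lam = 4 * Lr := by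
        have h1 : t0 * lam * (η * R) = (4 * Lr) * (η * R) := by
          calc t0 * lam * (η * R) = (t0 * (η * R)) * lam := by ring
            _ = (4 * sq) * lam := by rw [ht0def, div_mul_cancel₀ _ (ne_of_gt hηR)]
            _ = (4 * Lr) * (η * R) := by rw [hlamdef]; linear_combination (4*R)*hsq
        exact mul_right_cancel₀ (ne_of_gt hηR) h1
      have ht0sq : t0^2 * (η^2 * R^2) = 16 * (η * Lr) := by
        have h2 : t0^2 * (η^2 * R^2) = (t0 * (η * R))^2 := by ring
        rw [h2, ht0def, div_mul_cancel₀ _ (ne_of_gt hηR), ← hsq]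
        ring
      have hB : (3/16) * t0^2 * R^2 * ((τ:ℝ) * η^2) ≤ (3/2) * Lr := by
        have hq : (3/16) * t0^2 * R^2 * ((τ:ℝ) * η^2)
            = (3 * Lr) * ((τ:ℝ) * η) := by
          linear_combination ((3:ℝ)/16 * (τ:ℝ)) * ht0sq
        rw [hq]
        have h3L : (0:ℝ) ≤ 3 * Lr := by positivity
        have := mul_le_mul_of_nonneg_left hτη h3L
        linarith
      have hmono : (3/16) * t0^2 * R^2 * (∑ j ∈ Finset.Ioc (τ * (i / τ)) i,
            (η * (1 - η) ^ (i - j))^2) ≤ (3/16) * t0^2 * R^2 * ((τ:ℝ) * η^2) :=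
        mul_le_mul_of_nonneg_left hwsum (by positivity)
      have hLr0 : 0 < Lr := hLpos
      calc -t0*lam + 3/16*t0^2*R^2 * ∑ j ∈ Finset.Ioc (τ * (i / τ)) i,
            (η * (1 - η) ^ (i - j))^2
          ≤ -(4*Lr) + (3/2)*Lr := by
            rw [← hA]
            have := le_trans hmono hB
            linarith
        _ ≤ -(2*Lr) := by linarith
    -- properties of the centred one-step noise
    have hmu2 : ∀ sa, μm sa = ∑ s'', P sa s'' * Vstar s'' := fun sa => by rw [hmudef]
    have hgb1 : ∀ (sa : S × A) (s'' : S), |μm sa - Vstar s''| ≤ R := by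
      intro sa s''
      rw [abs_sub_le_iff]
      exact ⟨by linarith [(hμ_mem sa).2, (hVs_mem s'').1],
        by linarith [(hμ_mem sa).1, (hVs_mem s'').2]⟩
    have hgm1 : ∀ sa : S × A, ∑ s'', P sa s'' * (μm sa - Vstar s'') = 0 := by
      intro sa
      have h1 : ∑ s'', P sa s'' * (μm sa - Vstar s'')
          = μm sa * (∑ s'', P sa s'') - ∑ s'', P sa s'' * Vstar s'' := by
        rw [Finset.mul_sum, ← Finset.sum_sub_distrib]
        exact Finset.sum_congr rfl fun s'' _ => by ring
      rw [h1, hP1, mul_one, ← hmu2 sa, sub_self]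
    have hgv1 : ∀ sa : S × A, ∑ s'', P sa s'' * (μm sa - Vstar s'')^2 ≤ R^2/4 := by
      intro sa
      have hmu := hμ_mem sa
      have hS2 : ∑ s'', P sa s'' * (Vstar s'')^2 ≤ R * μm sa := by
        have hterm : ∀ s'' : S, P sa s'' * (Vstar s'')^2 ≤ P sa s'' * (R * Vstar s'') := by
          intro s''
          refine mul_le_mul_of_nonneg_left ?_ (hP0 sa s'')
          have hv := hVs_mem s''
          have h3 : Vstar s'' * (R - Vstar s'') = R * Vstar s'' - (Vstar s'')^2 := by ring
          have h4 : 0 ≤ Vstar s'' * (R - Vstar s'') :=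
            mul_nonneg hv.1 (by linarith [hv.2])
          linarith
        calc ∑ s'', P sa s'' * (Vstar s'')^2 ≤ ∑ s'', P sa s'' * (R * Vstar s'') :=
              Finset.sum_le_sum fun s'' _ => hterm s''
          _ = R * ∑ s'', P sa s'' * Vstar s'' := by
              rw [Finset.mul_sum]
              exact Finset.sum_congr rfl fun s'' _ => by ring
          _ = R * μm sa := by rw [← hmu2 sa]
      have hexp : ∑ s'', P sa s'' * (μm sa - Vstar s'')^2
          = (μm sa)^2 * (∑ s'', P sa s'') - 2 * μm sa * (∑ s'', P sa s'' * Vstar s'')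
            + ∑ s'', P sa s'' * (Vstar s'')^2 := by
        rw [Finset.mul_sum, Finset.mul_sum, ← Finset.sum_sub_distrib, ← Finset.sum_add_distrib]
        exact Finset.sum_congr rfl fun s'' _ => by ring
      rw [hexp, hP1, ← hmu2 sa, mul_one]
      have h5 : (R/2 - μm sa)^2 = R^2/4 - R * μm sa + (μm sa)^2 := by ring
      have h6 : 0 ≤ (R/2 - μm sa)^2 := sq_nonneg _
      linarith
    -- two-sided bound for a single event
    have htwo : ∀ (i : ℕ) (k : Fin K) (sa : S × A),
        Pr {ω | lam ≤ |Nsum i k sa ω|}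
          ≤ ENNReal.ofReal (2 * Real.exp (-(2*Lr))) := by
      intro i k sa
      have hgb2 : ∀ s'' : S, |Vstar s'' - μm sa| ≤ R := by
        intro s''; rw [abs_sub_comm]; exact hgb1 sa s''
      have hgm2 : ∑ s'', P sa s'' * (Vstar s'' - μm sa) = 0 := by
        have h1 : ∑ s'', P sa s'' * (Vstar s'' - μm sa)
            = - ∑ s'', P sa s'' * (μm sa - Vstar s'') := by
          rw [← Finset.sum_neg_distrib]
          exact Finset.sum_congr rfl fun s'' _ => by ring
        rw [h1, hgm1 sa, neg_zero]
      have hgv2 : ∑ s'', P sa s'' * (Vstar s'' - μm sa)^2 ≤ R^2/4 := by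
        have h1 : ∑ s'', P sa s'' * (Vstar s'' - μm sa)^2
            = ∑ s'', P sa s'' * (μm sa - Vstar s'')^2 :=
          Finset.sum_congr rfl fun s'' _ => by ring
        rw [h1]; exact hgv1 sa
      have hsub : {ω | lam ≤ |Nsum i k sa ω|} ⊆
          {ω | lam ≤ ∑ j ∈ Finset.Ioc (τ * (i / τ)) i,
              η * (1 - η) ^ (i - j) * ((fun s'' => μm sa - Vstar s'') (samp j k sa ω))} ∪
          {ω | lam ≤ ∑ j ∈ Finset.Ioc (τ * (i / τ)) i,
              η * (1 - η) ^ (i - j) * ((fun s'' => Vstar s'' - μm sa) (samp j k sa ω))} := by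
        intro ω hω
        simp only [Set.mem_setOf_eq] at hω
        rcases le_abs.1 hω with h | h
        · left; exact h
        · right
          simp only [Set.mem_setOf_eq]
          have heq : -Nsum i k sa ω = ∑ j ∈ Finset.Ioc (τ * (i / τ)) i,
              η * (1 - η) ^ (i - j) * (Vstar (samp j k sa ω) - μm sa) := by
            rw [hNdef]
            simp only []
            rw [← Finset.sum_neg_distrib]
            exact Finset.sum_congr rfl fun j _ => by ring
          calc lam ≤ -Nsum i k sa ω := h
            _ = _ := heq
      calc Pr {ω | lam ≤ |Nsum i k sa ω|} ≤ Pr (_ ∪ _) := measure_mono hsub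
        _ ≤ _ + _ := measure_union_le _ _
        _ ≤ ENNReal.ofReal (Real.exp (-(2*Lr))) + ENNReal.ofReal (Real.exp (-(2*Lr))) :=
            add_le_add (hone i k sa _ (hgb1 sa) (hgm1 sa) (hgv1 sa))
              (hone i k sa _ hgb2 hgm2 hgv2)
        _ = ENNReal.ofReal (2 * Real.exp (-(2*Lr))) := by
            rw [← ENNReal.ofReal_add (Real.exp_nonneg _) (Real.exp_nonneg _)]
            congr 1
            ring
    -- union bound
    have hPrbad : Pr bad ≤ ENNReal.ofReal δ := by
      have hstep1 : Pr bad ≤ ∑ i ∈ Finset.Icc 1 T, ∑ k : Fin K, ∑ sa : S × A,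
          ENNReal.ofReal (2 * Real.exp (-(2*Lr))) := by
        rw [hbaddef]
        refine le_trans (measure_biUnion_finset_le _ _) (Finset.sum_le_sum fun i _ => ?_)
        refine le_trans (measure_iUnion_fintype_le _ _) (Finset.sum_le_sum fun k _ => ?_)
        refine le_trans (measure_iUnion_fintype_le _ _) (Finset.sum_le_sum fun sa _ => ?_)
        exact htwo i k sa
      have hcount : ∑ i ∈ Finset.Icc 1 T, ∑ k : Fin K, ∑ sa : S × A,
          ENNReal.ofReal (2 * Real.exp (-(2*Lr)))
          = (T * (K * (Fintype.card S * Fintype.card A))) •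
              ENNReal.ofReal (2 * Real.exp (-(2*Lr))) := by
        simp only [Finset.sum_const, Finset.card_univ, Fintype.card_prod, Fintype.card_fin,
          Nat.card_Icc, smul_smul]
        congr 2
      have hexp2 : Real.exp (-(2*Lr)) =
          (δ / ((Fintype.card S) * (Fintype.card A) * K * T))^2 := by
        rw [show -(2*Lr) = -Lr + -Lr by ring, Real.exp_add, Real.exp_neg, hexpL, inv_div]
        ring
      have hXpos : (0:ℝ) < (Fintype.card S) * (Fintype.card A) * K * T := by linarith
      have hreal : ((T * (K * (Fintype.card S * Fintype.card A)) : ℕ) : ℝ)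
          * (2 * Real.exp (-(2*Lr))) ≤ δ := by
        rw [hexp2, div_pow]
        have hprod : ((T * (K * (Fintype.card S * Fintype.card A)) : ℕ) : ℝ)
            = (Fintype.card S) * (Fintype.card A) * K * T := by push_cast; ring
        rw [hprod]
        have hkey : ((Fintype.card S : ℝ) * (Fintype.card A) * K * T)
            * (2 * (δ^2 / ((Fintype.card S) * (Fintype.card A) * K * T)^2))
            = 2 * δ^2 / ((Fintype.card S) * (Fintype.card A) * K * T) := by
          field_simp
        rw [hkey, div_le_iff₀ hXpos]
        have h1 : δ * 2 ≤ δ * ((Fintype.card S) * (Fintype.card A) * K * T) :=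
          mul_le_mul_of_nonneg_left hNr2 hδ0.le
        nlinarith [hδ0, hδ1]
      calc Pr bad ≤ ∑ i ∈ Finset.Icc 1 T, ∑ k : Fin K, ∑ sa : S × A,
            ENNReal.ofReal (2 * Real.exp (-(2*Lr))) := hstep1
        _ = (T * (K * (Fintype.card S * Fintype.card A))) •
              ENNReal.ofReal (2 * Real.exp (-(2*Lr))) := hcount
        _ = ENNReal.ofReal (((T * (K * (Fintype.card S * Fintype.card A)) : ℕ) : ℝ)
              * (2 * Real.exp (-(2*Lr)))) := by
            rw [nsmul_eq_mul, ← ENNReal.ofReal_natCast, ← ENNReal.ofReal_mul (Nat.cast_nonneg _)]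
        _ ≤ ENNReal.ofReal δ := ENNReal.ofReal_le_ofReal hreal
    -- on the complement of the bad event, the claimed bound holds deterministically
    have hgood : ∀ ω, ω ∉ bad → ∀ i, 1 ≤ i → i ≤ T → ∀ k : Fin K,
        supNorm (fun sa : S × A => Qstar sa - Q i k sa ω)
          ≤ supNorm (fun sa : S × A =>
                Qstar sa - (K : ℝ)⁻¹ * ∑ k' : Fin K, Q (τ * (i / τ)) k' sa ω)
            + 2 / (1 - γ) * sq := by
      intro ω hω
      have hN : ∀ t, 1 ≤ t → t ≤ T → ∀ k sa, |Nsum t k sa ω| ≤ lam := by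
        intro t h1 h2 k sa
        by_contra hc
        push_neg at hc
        refine hω ?_
        rw [hbaddef]
        refine Set.mem_iUnion₂.2 ⟨t, Finset.mem_Icc.2 ⟨h1, h2⟩, ?_⟩
        exact Set.mem_iUnion.2 ⟨k, Set.mem_iUnion.2 ⟨sa, hc.le⟩⟩
      intro i hi1 hiT k
      obtain ⟨hble, hmlt, hbdvd⟩ := hblock i
      set b := τ * (i / τ) with hbdef
      set ub := supNorm (fun sa : S × A =>
        Qstar sa - (K : ℝ)⁻¹ * ∑ k' : Fin K, Q b k' sa ω) with hubdef
      have hub0 : 0 ≤ ub := supNorm_nonneg _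
      have hN0 : ∀ sa, Nsum b k sa ω = 0 := by
        intro sa
        rw [hNdef]
        simp only []
        rw [hι_self b hbdvd, Finset.Ioc_self, Finset.sum_empty]
      have hNt : ∀ n, b + n ≤ i → ∀ sa, |Nsum (b + n) k sa ω| ≤ lam := by
        intro n hn sa
        rcases Nat.eq_zero_or_pos n with h0 | hpos
        · subst h0
          simp only [Nat.add_zero]
          rw [hN0 sa, abs_zero]
          exact hlam0
        · exact hN (b + n) (by omega) (le_trans hn hiT) k sa
      have hNstep : ∀ n, n + 1 < τ → ∀ sa,
          Nsum (b + n + 1) k sa ω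
            = (1 - η) * Nsum (b + n) k sa ω
              + η * (μm sa - Vstar (samp (b + n + 1) k sa ω)) := by
        intro n hn sa
        have hι1 : τ * ((b + n + 1) / τ) = b := by
          have h := hι_add b (n + 1) hbdvd hn
          rwa [← Nat.add_assoc] at h
        have hι0 : τ * ((b + n) / τ) = b := hι_add b n hbdvd (by omega)
        rw [hNdef]
        simp only []
        rw [hι1, hι0]
        rw [Finset.sum_Ioc_succ_top (by omega : b ≤ b + n)]
        rw [Finset.mul_sum]
        congr 1
        · refine Finset.sum_congr rfl fun j hj => ?_
          have hjle : j ≤ b + n := (Finset.mem_Ioc.1 hj).2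
          have he : b + n + 1 - j = (b + n - j) + 1 := by omega
          rw [he, pow_succ]
          ring
        · rw [Nat.sub_self, pow_zero]
          ring
      have hclaim : ∀ n, b + n ≤ i → ∀ sa,
          |Qstar sa - Q (b + n) k sa ω - γ * Nsum (b + n) k sa ω|
            ≤ ub + n * (η * lam) := by
        intro n
        induction n with
        | zero =>
          intro _ sa
          simp only [Nat.add_zero, Nat.cast_zero, zero_mul, add_zero]
          rw [hN0 sa, mul_zero, sub_zero, ← hQavg b hbdvd k sa ω]
          exact abs_le_supNorm (fun sa : S × A =>
            Qstar sa - (K : ℝ)⁻¹ * ∑ k' : Fin K, Q b k' sa ω) sa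
        | succ n ih =>
          intro hle sa
          rw [← Nat.add_assoc]
          have hlen : b + n ≤ i := by omega
          have hn1τ : n + 1 < τ := by omega
          have ihn := ih hlen
          have hndvd : ¬ τ ∣ (b + n + 1) := by
            intro hdvd
            have h2 : τ ∣ (n + 1) := by
              have h3 := Nat.dvd_sub hdvd hbdvd
              have h4 : b + n + 1 - b = n + 1 := by omega
              rwa [h4] at h3
            have := Nat.le_of_dvd (by omega) h2
            omega
          have hQstep : Q (b + n + 1) k sa ω
              = (1 - η) * Q (b + n) k sa ω
                + η * (r sa + γ * vmax fun a' =>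
                    Q (b + n) k (samp (b + n + 1) k sa ω, a') ω) := by
            rw [havg, if_neg hndvd, hupd]
          set s' := samp (b + n + 1) k sa ω with hs'def
          have hNstepn := hNstep n hn1τ sa
          have het : ∀ sa', |Qstar sa' - Q (b + n) k sa' ω|
              ≤ ub + n * (η * lam) + γ * lam := by
            intro sa'
            have h1 := ihn sa'
            have h2 := hNt n hlen sa'
            have h3 : |γ * Nsum (b + n) k sa' ω| ≤ γ * lam := by
              rw [abs_mul, abs_of_nonneg hγ0]
              exact mul_le_mul_of_nonneg_left h2 hγ0
            have h4 : Qstar sa' - Q (b + n) k sa' ω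
                = (Qstar sa' - Q (b + n) k sa' ω - γ * Nsum (b + n) k sa' ω)
                  + γ * Nsum (b + n) k sa' ω := by ring
            rw [h4]
            refine le_trans (abs_add_le _ _) ?_
            linarith
          have hVt : |Vstar s' - vmax fun a => Q (b + n) k (s', a) ω|
              ≤ ub + n * (η * lam) + γ * lam :=
            abs_vmax_sub_vmax_le (fun a => het (s', a))
          have hkey : Qstar sa - Q (b + n + 1) k sa ω - γ * Nsum (b + n + 1) k sa ω
              = (1 - η) * (Qstar sa - Q (b + n) k sa ω - γ * Nsum (b + n) k sa ω)
                + η * γ * (Vstar s' - vmax fun a => Q (b + n) k (s', a) ω) := by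
            rw [hQstep, hNstepn]
            linear_combination η * hQstar' sa
          rw [hkey]
          have h2 : (0:ℝ) ≤ 1 - η := by linarith
          have habs : |(1 - η) * (Qstar sa - Q (b + n) k sa ω - γ * Nsum (b + n) k sa ω)
                + η * γ * (Vstar s' - vmax fun a => Q (b + n) k (s', a) ω)|
              ≤ (1 - η) * |Qstar sa - Q (b + n) k sa ω - γ * Nsum (b + n) k sa ω|
                + η * γ * |Vstar s' - vmax fun a => Q (b + n) k (s', a) ω| := by
            refine le_trans (abs_add_le _ _) ?_
            rw [abs_mul, abs_mul, abs_of_nonneg h2,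
              abs_of_nonneg (mul_nonneg hη0.le hγ0)]
          have h3 : (1 - η) * |Qstar sa - Q (b + n) k sa ω - γ * Nsum (b + n) k sa ω|
              ≤ (1 - η) * (ub + n * (η * lam)) := mul_le_mul_of_nonneg_left (ihn sa) h2
          have h4 : η * γ * |Vstar s' - vmax fun a => Q (b + n) k (s', a) ω|
              ≤ η * γ * (ub + n * (η * lam) + γ * lam) :=
            mul_le_mul_of_nonneg_left hVt (mul_nonneg hη0.le hγ0)
          have hXnn : (0:ℝ) ≤ ub + (n:ℝ) * (η * lam) :=
            add_nonneg hub0 (mul_nonneg (Nat.cast_nonneg n) (mul_nonneg hη0.le hlam0))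
          have h5 : γ * (ub + (n:ℝ) * (η * lam) + γ * lam)
              ≤ ub + (n:ℝ) * (η * lam) + lam := by
            have e0 : (0:ℝ) ≤ ub + (n:ℝ) * (η * lam) + γ * lam :=
              add_nonneg hXnn (mul_nonneg hγ0 hlam0)
            have e1 : γ * (ub + (n:ℝ) * (η * lam) + γ * lam)
                ≤ 1 * (ub + (n:ℝ) * (η * lam) + γ * lam) :=
              mul_le_mul_of_nonneg_right (by linarith) e0
            have e2 : γ * lam ≤ 1 * lam :=
              mul_le_mul_of_nonneg_right hγ1.le hlam0
            linarith
          have h6 : η * γ * (ub + (n:ℝ) * (η * lam) + γ * lam)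
              = η * (γ * (ub + (n:ℝ) * (η * lam) + γ * lam)) := by ring
          have h7 : η * (γ * (ub + (n:ℝ) * (η * lam) + γ * lam))
              ≤ η * (ub + (n:ℝ) * (η * lam) + lam) :=
            mul_le_mul_of_nonneg_left h5 hη0.le
          have h9 : (1 - η) * (ub + (n:ℝ) * (η * lam))
                + η * (ub + (n:ℝ) * (η * lam) + lam)
              = ub + (n:ℝ) * (η * lam) + η * lam := by ring
          push_cast
          linarith
      have hbi : b + (i - b) = i := by omega
      have hfin := hclaim (i - b) (by omega)
      have hNfin := hNt (i - b) (by omega)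
      rw [hbi] at hfin hNfin
      rw [hgoalform]
      refine supNorm_le fun sa => ?_
      have h1 := hfin sa
      have h2 := hNfin sa
      have h3 : |γ * Nsum i k sa ω| ≤ γ * lam := by
        rw [abs_mul, abs_of_nonneg hγ0]
        exact mul_le_mul_of_nonneg_left h2 hγ0
      have h4 : Qstar sa - Q i k sa ω
          = (Qstar sa - Q i k sa ω - γ * Nsum i k sa ω) + γ * Nsum i k sa ω := by ring
      have hcast : ((i - b : ℕ) : ℝ) * η ≤ 1/2 := by
        have hc : ((i - b : ℕ) : ℝ) ≤ (τ : ℝ) := by exact_mod_cast hmlt.le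
        exact le_trans (mul_le_mul_of_nonneg_right hc hη0.le) hτη
      have h5 : ((i - b : ℕ) : ℝ) * (η * lam) ≤ (1/2) * lam := by
        calc ((i - b : ℕ) : ℝ) * (η * lam) = (((i - b : ℕ) : ℝ) * η) * lam := by ring
          _ ≤ (1/2) * lam := mul_le_mul_of_nonneg_right hcast hlam0
      have h6 : γ * lam ≤ 1 * lam := mul_le_mul_of_nonneg_right hγ1.le hlam0
      rw [h4]
      refine le_trans (abs_add_le _ _) ?_
      linarith
    -- final assembly
    have hsub : badᶜ ⊆ {ω | ∀ i, 1 ≤ i → i ≤ T → ∀ k : Fin K,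
        supNorm (fun sa : S × A => Qstar sa - Q i k sa ω)
          ≤ supNorm (fun sa : S × A =>
                Qstar sa - (K : ℝ)⁻¹ * ∑ k' : Fin K, Q (τ * (i / τ)) k' sa ω)
            + 2 / (1 - γ) * sq} := fun ω hω => hgood ω hω
    calc ENNReal.ofReal (1 - δ) = ENNReal.ofReal 1 - ENNReal.ofReal δ :=
          ENNReal.ofReal_sub 1 hδ0.le
      _ = 1 - ENNReal.ofReal δ := by rw [ENNReal.ofReal_one]
      _ ≤ 1 - Pr bad := tsub_le_tsub_left hPrbad 1
      _ = Pr badᶜ := (prob_compl_eq_one_sub hbadmeas).symm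
      _ ≤ _ := measure_mono hsub
end

section
/- Properties of the equal-averaging aggregation weights: Consider integers v1, v2, t with 0 ≤ v1 ≤ v2 ≤ t ≤ T where τ divides t, a state-action pair (s,a) ∈ S×A, and any realization of the agents' trajectories. The quantities λ, ω_{0,t}, ω_{u,t}^k satisfy: (i) λ_{v1,v2}(s,a) ≤ (1-η)^{min_{k∈{1,…,K}} N_{v1,v2}^k(s,a)}; (ii) ω_{0,t}(s,a) + Σ_{k=1}^K Σ_{u∈𝒰_{0,t}^k(s,a)} ω_{u,t}^k(s,a) = 1; (iii) for every 0 ≤ h' ≤ φ(t), Σ_{k=1}^K Σ_{u∈𝒰_{0,h'τ}^k(s,a)} ω_{u,t}^k(s,a) ≤ (1-η)^{Σ_{h=h'}^{φ(t)-1} min_{k∈{1,…,K}} N_{hτ,(h+1)τ}^k(s,a)}; (iv) Σ_{k=1}^K Σ_{u∈𝒰_{0,t}^k(s,a)} (ω_{u,t}^k(s,a))^2 ≤ 2η/K. -/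
/-- The set of iteration indices `u ∈ [v1, v2)` at which the trajectory `x` visits `sa`. -/
def visits {X : Type*} [DecidableEq X] (x : ℕ → X) (v1 v2 : ℕ) (sa : X) : Finset ℕ :=
  (Finset.Ico v1 v2).filter fun u => x u = sa

/-- Number of visits of the trajectory `x` to `sa` during iterations in `[v1, v2)`. -/
def Nvis {X : Type*} [DecidableEq X] (x : ℕ → X) (v1 v2 : ℕ) (sa : X) : ℕ :=
  (visits x v1 v2 sa).card

/-- `λ_{v1,v2}(s,a) = (1/K) Σ_k (1-η)^{N_{v1,v2}^k(s,a)}`. -/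
noncomputable def lamW {X : Type*} [DecidableEq X] {K : ℕ} (η : ℝ)
    (traj : Fin K → ℕ → X) (v1 v2 : ℕ) (sa : X) : ℝ :=
  (K : ℝ)⁻¹ * ∑ k : Fin K, (1 - η) ^ Nvis (traj k) v1 v2 sa

/-- `ω_{0,t}(s,a) = Π_{h=0}^{φ(t)-1} λ_{hτ,(h+1)τ}(s,a)`, with `φ(t) = ⌊t/τ⌋`. -/
noncomputable def om0 {X : Type*} [DecidableEq X] {K : ℕ} (η : ℝ) (τ : ℕ)
    (traj : Fin K → ℕ → X) (t : ℕ) (sa : X) : ℝ :=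
  ∏ h ∈ Finset.range (t / τ), lamW η traj (h * τ) ((h + 1) * τ) sa

/-- `ω_{u,t}^k(s,a) = (η/K)(1-η)^{N_{u+1,(φ(u)+1)τ}^k(s,a)} Π_{l=φ(u)+1}^{φ(t)-1} λ_{lτ,(l+1)τ}(s,a)`. -/
noncomputable def omU {X : Type*} [DecidableEq X] {K : ℕ} (η : ℝ) (τ : ℕ)
    (traj : Fin K → ℕ → X) (k : Fin K) (u t : ℕ) (sa : X) : ℝ :=
  (η / K) * (1 - η) ^ Nvis (traj k) (u + 1) ((u / τ + 1) * τ) sa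
    * ∏ l ∈ Finset.Ico (u / τ + 1) (t / τ), lamW η traj (l * τ) ((l + 1) * τ) sa

section aux
variable {X : Type*} [DecidableEq X]

lemma visits_self (x : ℕ → X) (v : ℕ) (sa : X) : visits x v v sa = ∅ := by
  simp [visits]

lemma not_mem_visits (x : ℕ → X) (v1 v2 : ℕ) (sa : X) : v2 ∉ visits x v1 v2 sa := by
  simp [visits]

lemma visits_succ (x : ℕ → X) {v1 v2 : ℕ} (h : v1 ≤ v2) (sa : X) :
    visits x v1 (v2+1) sa
      = if x v2 = sa then insert v2 (visits x v1 v2 sa) else visits x v1 v2 sa := by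
  unfold visits
  rw [Nat.Ico_succ_right_eq_insert_Ico h, Finset.filter_insert]

lemma Nvis_succ (x : ℕ → X) {v1 v2 : ℕ} (h : v1 ≤ v2) (sa : X) :
    Nvis x v1 (v2+1) sa = Nvis x v1 v2 sa + if x v2 = sa then 1 else 0 := by
  unfold Nvis
  rw [visits_succ x h sa]
  split
  · rw [Finset.card_insert_of_notMem (not_mem_visits x v1 v2 sa)]
  · simp

lemma block_sum (η : ℝ) (x : ℕ → X) (sa : X) (v1 : ℕ) :
    ∀ v2, v1 ≤ v2 →
    η * ∑ u ∈ visits x v1 v2 sa, (1-η) ^ Nvis x (u+1) v2 sa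
      = 1 - (1-η) ^ Nvis x v1 v2 sa := by
  intro v2
  induction v2 with
  | zero =>
      intro h
      interval_cases v1
      simp [visits_self, Nvis]
  | succ n ih =>
      intro h
      rcases h.eq_or_lt with h' | h'
      · subst h'
        simp [visits_self, Nvis]
      · have hvn : v1 ≤ n := Nat.lt_succ_iff.mp h'
        rw [visits_succ x hvn sa]
        by_cases hx : x n = sa
        · rw [if_pos hx, Finset.sum_insert (not_mem_visits x v1 n sa)]
          have hN : Nvis x (n+1) (n+1) sa = 0 := by simp [Nvis, visits_self]
          rw [hN]
          have hcong : ∀ u ∈ visits x v1 n sa,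
              (1-η) ^ Nvis x (u+1) (n+1) sa = (1-η) ^ Nvis x (u+1) n sa * (1-η) := by
            intro u hu
            have hu' : u < n := by simp [visits, Finset.mem_filter, Finset.mem_Ico] at hu; omega
            rw [Nvis_succ x hu' sa, if_pos hx, pow_succ]
          rw [Finset.sum_congr rfl hcong, ← Finset.sum_mul,
            Nvis_succ x hvn sa, if_pos hx, pow_succ]
          linear_combination (1 - η) * ih hvn
        · rw [if_neg hx]
          have hcong : ∀ u ∈ visits x v1 n sa,
              (1-η) ^ Nvis x (u+1) (n+1) sa = (1-η) ^ Nvis x (u+1) n sa := by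
            intro u hu
            have hu' : u < n := by simp [visits, Finset.mem_filter, Finset.mem_Ico] at hu; omega
            rw [Nvis_succ x hu' sa, if_neg hx, Nat.add_zero]
          rw [Finset.sum_congr rfl hcong, Nvis_succ x hvn sa, if_neg hx, Nat.add_zero]
          exact ih hvn

variable {K : ℕ} [NeZero K] {η : ℝ}

lemma lamW_nonneg (hη1 : η < 1) (traj : Fin K → ℕ → X) (v1 v2 : ℕ) (sa : X) :
    0 ≤ lamW η traj v1 v2 sa := by
  have h0 : (0:ℝ) ≤ 1 - η := by linarith
  exact mul_nonneg (by positivity) (Finset.sum_nonneg fun k _ => pow_nonneg h0 _)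

lemma lamW_le_inf (hη0 : 0 < η) (hη1 : η < 1) (traj : Fin K → ℕ → X) (v1 v2 : ℕ) (sa : X) :
    lamW η traj v1 v2 sa
      ≤ (1 - η) ^ (Finset.univ.inf' Finset.univ_nonempty
          fun k : Fin K => Nvis (traj k) v1 v2 sa) := by
  have h0 : (0:ℝ) ≤ 1 - η := by linarith
  have h1 : 1 - η ≤ 1 := by linarith
  have hK : (0:ℝ) < K := by exact_mod_cast Nat.pos_of_ne_zero (NeZero.ne K)
  rw [lamW, inv_mul_le_iff₀ hK]
  have := Finset.sum_le_card_nsmul Finset.univ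
    (fun k : Fin K => (1-η) ^ Nvis (traj k) v1 v2 sa)
    ((1 - η) ^ (Finset.univ.inf' Finset.univ_nonempty
        fun k : Fin K => Nvis (traj k) v1 v2 sa))
    (fun k _ => pow_le_pow_of_le_one h0 h1
      (Finset.inf'_le (fun k : Fin K => Nvis (traj k) v1 v2 sa) (Finset.mem_univ k)))
  simpa [Finset.card_univ, mul_comm] using this

lemma lamW_le_one (hη0 : 0 < η) (hη1 : η < 1) (traj : Fin K → ℕ → X) (v1 v2 : ℕ) (sa : X) :
    lamW η traj v1 v2 sa ≤ 1 := by
  have h0 : (0:ℝ) ≤ 1 - η := by linarith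
  have h1 : 1 - η ≤ 1 := by linarith
  have hK : (0:ℝ) < K := by exact_mod_cast Nat.pos_of_ne_zero (NeZero.ne K)
  rw [lamW, inv_mul_le_iff₀ hK, mul_one]
  have := Finset.sum_le_card_nsmul Finset.univ
    (fun k : Fin K => (1-η) ^ Nvis (traj k) v1 v2 sa) 1
    (fun k _ => pow_le_one₀ h0 h1)
  simpa [Finset.card_univ] using this

end aux

/-- properties of the equal-averaging aggregation weights. -/
theorem eq_avg_weight_properties
    {S A : Type*} [Fintype S] [Fintype A] [DecidableEq S] [DecidableEq A]
    (K : ℕ) [NeZero K] (η : ℝ) (hη0 : 0 < η) (hη1 : η < 1)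
    (τ T : ℕ) (hτ : 1 ≤ τ) (hτT : τ ∣ T)
    (traj : Fin K → ℕ → S × A)
    (v1 v2 t : ℕ) (hv12 : v1 ≤ v2) (hv2t : v2 ≤ t) (htT : t ≤ T) (hτt : τ ∣ t)
    (sa : S × A) :
    -- (i)
    lamW η traj v1 v2 sa
        ≤ (1 - η) ^ (Finset.univ.inf' Finset.univ_nonempty
            fun k : Fin K => Nvis (traj k) v1 v2 sa) ∧
    -- (ii)
    om0 η τ traj t sa
        + ∑ k : Fin K, ∑ u ∈ visits (traj k) 0 t sa, omU η τ traj k u t sa = 1 ∧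
    -- (iii)
    (∀ h' : ℕ, h' ≤ t / τ →
      ∑ k : Fin K, ∑ u ∈ visits (traj k) 0 (h' * τ) sa, omU η τ traj k u t sa
        ≤ (1 - η) ^ (∑ h ∈ Finset.Ico h' (t / τ),
            Finset.univ.inf' Finset.univ_nonempty
              fun k : Fin K => Nvis (traj k) (h * τ) ((h + 1) * τ) sa)) ∧
    -- (iv)
    ∑ k : Fin K, ∑ u ∈ visits (traj k) 0 t sa, (omU η τ traj k u t sa) ^ 2
        ≤ 2 * η / K := by
  have h0 : (0:ℝ) ≤ 1 - η := by linarith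
  have h1 : 1 - η ≤ 1 := by linarith
  have hK : (0:ℝ) < K := by exact_mod_cast Nat.pos_of_ne_zero (NeZero.ne K)
  have hKne : (K:ℝ) ≠ 0 := ne_of_gt hK
  -- block contribution
  have hblock : ∀ h : ℕ,
      ∑ k : Fin K, ∑ u ∈ visits (traj k) (h*τ) ((h+1)*τ) sa, omU η τ traj k u t sa
        = (1 - lamW η traj (h*τ) ((h+1)*τ) sa)
            * ∏ l ∈ Finset.Ico (h+1) (t/τ), lamW η traj (l*τ) ((l+1)*τ) sa := by
    intro h
    have hstep : ∀ k : Fin K,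
        ∑ u ∈ visits (traj k) (h*τ) ((h+1)*τ) sa, omU η τ traj k u t sa
          = (K:ℝ)⁻¹ * (1 - (1-η) ^ Nvis (traj k) (h*τ) ((h+1)*τ) sa)
              * ∏ l ∈ Finset.Ico (h+1) (t/τ), lamW η traj (l*τ) ((l+1)*τ) sa := by
      intro k
      have hcong : ∀ u ∈ visits (traj k) (h*τ) ((h+1)*τ) sa,
          omU η τ traj k u t sa
            = (η / K) * (1-η) ^ Nvis (traj k) (u+1) ((h+1)*τ) sa
                * ∏ l ∈ Finset.Ico (h+1) (t/τ), lamW η traj (l*τ) ((l+1)*τ) sa := by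
        intro u hu
        have hdiv : u / τ = h := by
          simp only [visits, Finset.mem_filter, Finset.mem_Ico] at hu
          exact Nat.div_eq_of_lt_le hu.1.1 hu.1.2
        rw [omU, hdiv]
      have hb := block_sum η (traj k) sa (h*τ) ((h+1)*τ) (Nat.mul_le_mul_right τ (Nat.le_succ h))
      rw [Finset.sum_congr rfl hcong, ← Finset.sum_mul, ← Finset.mul_sum]
      linear_combination ((∏ l ∈ Finset.Ico (h+1) (t/τ), lamW η traj (l*τ) ((l+1)*τ) sa) / K) * hb
    rw [Finset.sum_congr rfl (fun k _ => hstep k), ← Finset.sum_mul, ← Finset.mul_sum,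
      Finset.sum_sub_distrib, Finset.sum_const, Finset.card_univ, Fintype.card_fin,
      nsmul_eq_mul, mul_one, lamW]
    field_simp
  -- cumulative sum
  have hdecomp : ∀ h', h' ≤ t/τ →
      ∑ k : Fin K, ∑ u ∈ visits (traj k) 0 (h'*τ) sa, omU η τ traj k u t sa
        = (1 - ∏ h ∈ Finset.range h', lamW η traj (h*τ) ((h+1)*τ) sa)
            * ∏ l ∈ Finset.Ico h' (t/τ), lamW η traj (l*τ) ((l+1)*τ) sa := by
    intro h'
    induction h' with
    | zero => intro _; simp [visits_self]
    | succ n ih =>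
        intro hn
        have hn' : n ≤ t/τ := Nat.le_of_succ_le hn
        have hnm : n < t/τ := hn
        have hsplit : ∀ x : ℕ → S × A, visits x 0 ((n+1)*τ) sa
            = visits x 0 (n*τ) sa ∪ visits x (n*τ) ((n+1)*τ) sa := by
          intro x
          unfold visits
          rw [← Finset.filter_union,
            Finset.Ico_union_Ico_eq_Ico (Nat.zero_le _) (Nat.mul_le_mul_right τ (Nat.le_succ n))]
        have hdisj : ∀ x : ℕ → S × A,
            Disjoint (visits x 0 (n*τ) sa) (visits x (n*τ) ((n+1)*τ) sa) := fun x =>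
          Finset.disjoint_filter_filter (Finset.Ico_disjoint_Ico_consecutive 0 (n*τ) ((n+1)*τ))
        have hprod : ∏ l ∈ Finset.Ico n (t/τ), lamW η traj (l*τ) ((l+1)*τ) sa
            = lamW η traj (n*τ) ((n+1)*τ) sa
                * ∏ l ∈ Finset.Ico (n+1) (t/τ), lamW η traj (l*τ) ((l+1)*τ) sa := by
          rw [← Finset.insert_Ico_add_one_left_eq_Ico hnm, Finset.prod_insert (by simp)]
        rw [Finset.sum_congr rfl (fun k _ => by
            rw [hsplit (traj k), Finset.sum_union (hdisj (traj k))]),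
          Finset.sum_add_distrib, ih hn', hblock n, hprod, Finset.prod_range_succ]
        ring
  have ht : (t/τ) * τ = t := Nat.div_mul_cancel hτt
  -- (ii)
  have hii : om0 η τ traj t sa
      + ∑ k : Fin K, ∑ u ∈ visits (traj k) 0 t sa, omU η τ traj k u t sa = 1 := by
    have hd := hdecomp (t/τ) le_rfl
    rw [ht] at hd
    rw [hd, om0]
    simp
  refine ⟨lamW_le_inf hη0 hη1 traj v1 v2 sa, hii, ?_, ?_⟩
  -- (iii)
  · intro h' hh'
    rw [hdecomp h' hh']
    have hQ0 : 0 ≤ ∏ h ∈ Finset.range h', lamW η traj (h*τ) ((h+1)*τ) sa :=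
      Finset.prod_nonneg fun h _ => lamW_nonneg hη1 traj _ _ sa
    have hR0 : 0 ≤ ∏ l ∈ Finset.Ico h' (t/τ), lamW η traj (l*τ) ((l+1)*τ) sa :=
      Finset.prod_nonneg fun h _ => lamW_nonneg hη1 traj _ _ sa
    have hRle : ∏ l ∈ Finset.Ico h' (t/τ), lamW η traj (l*τ) ((l+1)*τ) sa
        ≤ ∏ l ∈ Finset.Ico h' (t/τ), (1 - η) ^ (Finset.univ.inf' Finset.univ_nonempty
            fun k : Fin K => Nvis (traj k) (l*τ) ((l+1)*τ) sa) :=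
      Finset.prod_le_prod (fun h _ => lamW_nonneg hη1 traj _ _ sa)
        (fun l _ => lamW_le_inf hη0 hη1 traj _ _ sa)
    rw [Finset.prod_pow_eq_pow_sum] at hRle
    nlinarith [hQ0, hR0, hRle]
  -- (iv)
  · have hom_nonneg : ∀ (k : Fin K) (u : ℕ), 0 ≤ omU η τ traj k u t sa := by
      intro k u
      exact mul_nonneg (mul_nonneg (div_nonneg hη0.le hK.le) (pow_nonneg h0 _))
        (Finset.prod_nonneg fun l _ => lamW_nonneg hη1 traj _ _ sa)
    have hom_le : ∀ (k : Fin K) (u : ℕ), omU η τ traj k u t sa ≤ η / K := by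
      intro k u
      have h2 : (1-η) ^ Nvis (traj k) (u + 1) ((u / τ + 1) * τ) sa ≤ 1 := pow_le_one₀ h0 h1
      have h3 : ∏ l ∈ Finset.Ico (u/τ+1) (t/τ), lamW η traj (l*τ) ((l+1)*τ) sa ≤ 1 :=
        Finset.prod_le_one (fun l _ => lamW_nonneg hη1 traj _ _ sa)
          (fun l _ => lamW_le_one hη0 hη1 traj _ _ sa)
      have h4 : 0 ≤ ∏ l ∈ Finset.Ico (u/τ+1) (t/τ), lamW η traj (l*τ) ((l+1)*τ) sa :=
        Finset.prod_nonneg fun l _ => lamW_nonneg hη1 traj _ _ sa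
      have h5 : 0 ≤ (1-η) ^ Nvis (traj k) (u + 1) ((u / τ + 1) * τ) sa := pow_nonneg h0 _
      have h6 : 0 ≤ η / (K:ℝ) := div_nonneg hη0.le hK.le
      calc omU η τ traj k u t sa
          ≤ (η / K) * (1-η) ^ Nvis (traj k) (u + 1) ((u / τ + 1) * τ) sa * 1 := by
            rw [omU]; exact mul_le_mul_of_nonneg_left h3 (mul_nonneg h6 h5)
        _ ≤ η / K := by nlinarith
    have hom0_nonneg : 0 ≤ om0 η τ traj t sa := by
      rw [om0]
      exact Finset.prod_nonneg fun h _ => lamW_nonneg hη1 traj _ _ sa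
    have hsum_le : ∑ k : Fin K, ∑ u ∈ visits (traj k) 0 t sa, omU η τ traj k u t sa ≤ 1 := by
      linarith [hii]
    have hsum_nonneg : 0 ≤ ∑ k : Fin K, ∑ u ∈ visits (traj k) 0 t sa, omU η τ traj k u t sa :=
      Finset.sum_nonneg fun k _ => Finset.sum_nonneg fun u _ => hom_nonneg k u
    calc ∑ k : Fin K, ∑ u ∈ visits (traj k) 0 t sa, (omU η τ traj k u t sa) ^ 2
        ≤ ∑ k : Fin K, ∑ u ∈ visits (traj k) 0 t sa, (η/K) * omU η τ traj k u t sa := by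
          refine Finset.sum_le_sum fun k _ => Finset.sum_le_sum fun u _ => ?_
          rw [sq]
          exact mul_le_mul_of_nonneg_right (hom_le k u) (hom_nonneg k u)
      _ = (η/K) * ∑ k : Fin K, ∑ u ∈ visits (traj k) 0 t sa, omU η τ traj k u t sa := by
          simp only [Finset.mul_sum]
      _ ≤ 2 * η / K := by
          have h6 : 0 ≤ η / (K:ℝ) := div_nonneg hη0.le hK.le
          have : (η/K) * ∑ k : Fin K, ∑ u ∈ visits (traj k) 0 t sa, omU η τ traj k u t sa
              ≤ η / K * 1 := mul_le_mul_of_nonneg_left hsum_le h6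
          rw [mul_one] at this
          calc (η/K) * ∑ k : Fin K, ∑ u ∈ visits (traj k) 0 t sa, omU η τ traj k u t sa
              ≤ η / K := this
            _ ≤ 2 * η / K := by gcongr <;> linarith
end
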